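/- arXiv:2507.13312 — 5 statements merged into one kernel-verified Lean document; each statement's English description precedes it below -/
import Mathlib

section
/- Let m > 0, k_m > 0 and k_λ > 0 with k_λ < 1/(4m²). Then p = 1 minimizes the total cost C(p) = (2p+1)/(4pm) + (k_m + p·k_λ)·m over p ∈ (0,1]; that is, C(1) ≤ C(p) for all p ∈ (0,1], with strict inequality whenever p < 1. -/
/-- Theorem 2 of the paper: if the transmission cost satisfies
`k_λ < 1/(4m²)`, then always transmitting after every measurement (`p = 1`)
minimizes the total cost `C(p) = (2p+1)/(4pm) + (k_m + p k_λ) m` over `p ∈ (0,1]`,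
strictly so for `p < 1`. -/
theorem always_transmit_optimal
    (m km kl : ℝ) (hm : 0 < m) (hkm : 0 < km) (hkl : 0 < kl)
    (hthr : kl < 1 / (4 * m ^ 2)) :
    ∀ p : ℝ, 0 < p → p ≤ 1 →
      ((2 * (1 : ℝ) + 1) / (4 * 1 * m) + (km + 1 * kl) * m ≤
        (2 * p + 1) / (4 * p * m) + (km + p * kl) * m) ∧
      (p < 1 →
        (2 * (1 : ℝ) + 1) / (4 * 1 * m) + (km + 1 * kl) * m <
          (2 * p + 1) / (4 * p * m) + (km + p * kl) * m) := by
  intro p hp hp1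
  have hm2 : 0 < 4 * m ^ 2 := by positivity
  have hkl' : kl * (4 * m ^ 2) < 1 := by
    rw [lt_div_iff₀ hm2] at hthr; linarith
  have hdiff : (2 * p + 1) / (4 * p * m) + (km + p * kl) * m -
      ((2 * (1 : ℝ) + 1) / (4 * 1 * m) + (km + 1 * kl) * m) =
      (1 - p) * (1 - kl * (4 * p * m ^ 2)) / (4 * p * m) := by
    field_simp
    ring
  have hpos : 0 < 4 * p * m := by positivity
  have hfac : 0 < 1 - kl * (4 * p * m ^ 2) := by
    nlinarith [mul_pos hkl hm2]
  constructor
  · nlinarith [mul_nonneg (mul_nonneg (by linarith : (0:ℝ) ≤ 1 - p) hfac.le) (le_of_lt hpos), div_nonneg (mul_nonneg (by linarith : (0:ℝ) ≤ 1 - p) hfac.le) hpos.le]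
  · intro hlt
    have : 0 < (1 - p) * (1 - kl * (4 * p * m ^ 2)) / (4 * p * m) :=
      div_pos (mul_pos (by linarith) hfac) hpos
    linarith [hdiff]
end

section
/- Let m > 0, k_m > 0 and k_λ > 0 with k_λ ≥ 1/(4m²). Set p* = 1/(2m·√k_λ). Then 0 < p* ≤ 1 and p* minimizes the total cost C(p) = (2p+1)/(4pm) + (k_m + p·k_λ)·m over p ∈ (0,1]: C(p*) ≤ C(p) for all p ∈ (0,1]. -/
/-- When the transmission cost is above the threshold, `k_λ ≥ 1/(4m²)`,
the point `p* = 1/(2 m √k_λ)` lies in `(0,1]` and minimizes the total cost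
`C(p) = (2p+1)/(4pm) + (k_m + p k_λ) m` over `p ∈ (0,1]`. -/
theorem interior_optimum_above_threshold
    (m km kl : ℝ) (hm : 0 < m) (hkm : 0 < km) (hkl : 0 < kl)
    (hthr : 1 / (4 * m ^ 2) ≤ kl) :
    0 < 1 / (2 * m * Real.sqrt kl) ∧ 1 / (2 * m * Real.sqrt kl) ≤ 1 ∧
    ∀ p : ℝ, 0 < p → p ≤ 1 →
      (2 * (1 / (2 * m * Real.sqrt kl)) + 1) /
          (4 * (1 / (2 * m * Real.sqrt kl)) * m) +
        (km + (1 / (2 * m * Real.sqrt kl)) * kl) * m ≤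
      (2 * p + 1) / (4 * p * m) + (km + p * kl) * m := by
  set s := Real.sqrt kl with hs
  have hs0 : 0 < s := Real.sqrt_pos.mpr hkl
  have hsq : s ^ 2 = kl := Real.sq_sqrt hkl.le
  have hden : 0 < 2 * m * s := by positivity
  have hpstar : (0:ℝ) < 1 / (2 * m * s) := by positivity
  have h4 : 1 ≤ kl * (4 * m ^ 2) := by
    rw [div_le_iff₀ (by positivity)] at hthr; linarith
  have hms : 1 ≤ 2 * m * s := by nlinarith [h4, hsq]
  refine ⟨hpstar, by
    rw [div_le_one hden]; linarith, ?_⟩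
  intro p hp hp1
  have h1 : (2 * (1 / (2 * m * s)) + 1) / (4 * (1 / (2 * m * s)) * m) +
      (km + (1 / (2 * m * s)) * kl) * m = 1 / (2 * m) + s + km * m := by
    field_simp
    rw [← hsq]; ring
  have h2 : (2 * p + 1) / (4 * p * m) + (km + p * kl) * m =
      1 / (2 * m) + (1 / (4 * p * m) + p * kl * m) + km * m := by
    field_simp
    rw [← hsq]; ring
  rw [h1, h2]
  have key : s ≤ 1 / (4 * p * m) + p * kl * m := by
    rw [← hsq, div_add' _ _ _ (by positivity), le_div_iff₀ (by positivity)]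
    nlinarith [sq_nonneg (2 * p * m * s - 1)]
  linarith
end

section
/- Let m > 0, η > 0 and k_m > 0 with k_m < 1/(4ηm²), and set k_λ = η·k_m. Then k_λ < 1/(4m²), and p = 1 minimizes the total cost C(p) = (2p+1)/(4pm) + (k_m + p·k_λ)·m over p ∈ (0,1]: C(1) ≤ C(p) for all p ∈ (0,1], with strict inequality whenever p < 1. -/
/-- With proportional costs `k_λ = η k_m` and `k_m < 1/(4 η m²)`, the
transmission cost is below the threshold `1/(4m²)`, and `p = 1` minimizes the
total cost `C(p) = (2p+1)/(4pm) + (k_m + p k_λ) m` over `p ∈ (0,1]`,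
strictly so for `p < 1`. -/
theorem always_transmit_optimal_proportional_costs
    (m η km kl : ℝ) (hm : 0 < m) (hη : 0 < η) (hkm : 0 < km)
    (hthr : km < 1 / (4 * η * m ^ 2)) (hkl : kl = η * km) :
    kl < 1 / (4 * m ^ 2) ∧
    ∀ p : ℝ, 0 < p → p ≤ 1 →
      ((2 * (1 : ℝ) + 1) / (4 * 1 * m) + (km + 1 * kl) * m ≤
        (2 * p + 1) / (4 * p * m) + (km + p * kl) * m) ∧
      (p < 1 →
        (2 * (1 : ℝ) + 1) / (4 * 1 * m) + (km + 1 * kl) * m <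
          (2 * p + 1) / (4 * p * m) + (km + p * kl) * m) := by
  have h4 : (0:ℝ) < 4 * η * m ^ 2 := by positivity
  rw [lt_div_iff₀ h4] at hthr
  have hklthr : kl < 1 / (4 * m ^ 2) := by
    rw [lt_div_iff₀ (by positivity : (0:ℝ) < 4 * m ^ 2), hkl]
    nlinarith
  have hklm : kl * (4 * m ^ 2) < 1 := by
    rw [lt_div_iff₀ (by positivity : (0:ℝ) < 4 * m ^ 2)] at hklthr
    exact hklthr
  refine ⟨hklthr, fun p hp hp1 => ?_⟩
  have hpm : (4 : ℝ) * p * m ≠ 0 := by positivity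
  have hm4 : (4 : ℝ) * 1 * m ≠ 0 := by positivity
  have key : (2 * p + 1) / (4 * p * m) + (km + p * kl) * m -
      ((2 * (1 : ℝ) + 1) / (4 * 1 * m) + (km + 1 * kl) * m) =
      (1 - p) * (1 - kl * (4 * m ^ 2) * p) / (4 * p * m) := by
    field_simp
    ring
  constructor
  · rw [← sub_nonneg, key]
    apply div_nonneg _ (by positivity)
    have : kl * (4 * m ^ 2) * p < 1 := by nlinarith
    nlinarith
  · intro hplt
    rw [← sub_pos, key]
    apply div_pos _ (by positivity)
    have : kl * (4 * m ^ 2) * p < 1 := by nlinarith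
    nlinarith
end

section
/- Let d > 0, m₁ > 0, m₂ > 0 and 0 < p ≤ 1. Define N = p·m₁·m₂·(p·m₂ + 2d + m₁), τ_Θ = τ_F = τ_B = τ_Γ = (2pdm₂ + pm₁m₂ + dm₁ + m₁²)/N, τ_A = (2p²m₂² + 2pdm₂ + 2pm₁m₂ + dm₁)/N, and τ_Ψ = τ_E = (2p²m₂² + 2pdm₂ + dm₁ + m₁²)/N. Then these values satisfy the following system of reset-time equations: (i) τ_A = 2/(d+m₁) + (d/(d+m₁))·τ_E; (ii) τ_Γ = 1/(m₂+d+pm₁) + ((1−p)m₂/(m₂+d+pm₁))·τ_F + (d/(m₂+d+pm₁))·τ_E + (pm₁/(m₂+d+pm₁))·τ_B; (iii) τ_E = (pm₁/(m₁+m₂))·τ_B + ((1−p)m₁/(m₁+m₂))·τ_Γ + (pm₂/(m₁+m₂))·τ_A + ((1−p)m₂/(m₁+m₂))·τ_Ψ; (iv) τ_F = (pm₁/(pm₁+pm₂+2d))·τ_Θ + 1/(pm₁+pm₂+2d) + (d/(pm₁+pm₂+2d))·τ_Γ + (d/(pm₁+pm₂+2d))·τ_Ψ; (v) τ_B = 1/(m₂+d)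 + ((1−p)m₂/(m₂+d))·τ_Θ + (d/(m₂+d))·τ_E; (vi) τ_Θ = 1/(pm₂+2d) + (d/(pm₂+2d))·τ_B + (d/(pm₂+2d))·τ_Ψ. -/
/-- The closed-form reset times claimed in the paper satisfy the first-step
(conditional transition probability) system of equations for the expected
times to return to a fully correct knowledge state. -/
theorem reset_times_satisfy_system
    (d m₁ m₂ p : ℝ) (hd : 0 < d) (hm₁ : 0 < m₁) (hm₂ : 0 < m₂)
    (hp0 : 0 < p) (hp1 : p ≤ 1)
    (N τΘ τF τB τΓ τA τΨ τE : ℝ)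
    (hN : N = p * m₁ * m₂ * (p * m₂ + 2 * d + m₁))
    (hτΘ : τΘ = (2 * p * d * m₂ + p * m₁ * m₂ + d * m₁ + m₁ ^ 2) / N)
    (hτF : τF = (2 * p * d * m₂ + p * m₁ * m₂ + d * m₁ + m₁ ^ 2) / N)
    (hτB : τB = (2 * p * d * m₂ + p * m₁ * m₂ + d * m₁ + m₁ ^ 2) / N)
    (hτΓ : τΓ = (2 * p * d * m₂ + p * m₁ * m₂ + d * m₁ + m₁ ^ 2) / N)
    (hτA : τA = (2 * p ^ 2 * m₂ ^ 2 + 2 * p * d * m₂ + 2 * p * m₁ * m₂ + d * m₁) / N)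
    (hτΨ : τΨ = (2 * p ^ 2 * m₂ ^ 2 + 2 * p * d * m₂ + d * m₁ + m₁ ^ 2) / N)
    (hτE : τE = (2 * p ^ 2 * m₂ ^ 2 + 2 * p * d * m₂ + d * m₁ + m₁ ^ 2) / N) :
    τA = 2 / (d + m₁) + (d / (d + m₁)) * τE ∧
    τΓ = 1 / (m₂ + d + p * m₁) + ((1 - p) * m₂ / (m₂ + d + p * m₁)) * τF +
      (d / (m₂ + d + p * m₁)) * τE + (p * m₁ / (m₂ + d + p * m₁)) * τB ∧
    τE = (p * m₁ / (m₁ + m₂)) * τB + ((1 - p) * m₁ / (m₁ + m₂)) * τΓ +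
      (p * m₂ / (m₁ + m₂)) * τA + ((1 - p) * m₂ / (m₁ + m₂)) * τΨ ∧
    τF = (p * m₁ / (p * m₁ + p * m₂ + 2 * d)) * τΘ + 1 / (p * m₁ + p * m₂ + 2 * d) +
      (d / (p * m₁ + p * m₂ + 2 * d)) * τΓ + (d / (p * m₁ + p * m₂ + 2 * d)) * τΨ ∧
    τB = 1 / (m₂ + d) + ((1 - p) * m₂ / (m₂ + d)) * τΘ + (d / (m₂ + d)) * τE ∧
    τΘ = 1 / (p * m₂ + 2 * d) + (d / (p * m₂ + 2 * d)) * τB +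
      (d / (p * m₂ + 2 * d)) * τΨ := by
  subst hN hτΘ hτF hτB hτΓ hτA hτΨ hτE
  have hp : 0 < p * m₂ + 2 * d + m₁ := by positivity
  have hN : p * m₁ * m₂ * (p * m₂ + 2 * d + m₁) ≠ 0 := by positivity
  have h1 : d + m₁ ≠ 0 := by positivity
  have h2 : m₂ + d + p * m₁ ≠ 0 := by positivity
  have h3 : m₁ + m₂ ≠ 0 := by positivity
  have h4 : p * m₁ + p * m₂ + 2 * d ≠ 0 := by positivity
  have h5 : m₂ + d ≠ 0 := by positivity
  have h6 : p * m₂ + 2 * d ≠ 0 := by positivity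
  refine ⟨?_, ?_, ?_, ?_, ?_, ?_⟩ <;> (field_simp; ring)
end

section
/- Let m > 0 and 0 < p < 1, and let d₁ > 0 and d₂ > 0 be two drift rates. For a drift rate d > 0, define N(d) = p·m·m·(p·m + 2d + m), τ_A(d) = (2p²m² + 2pdm + 2pm² + dm)/N(d), τ_B(d) = τ_Γ(d) = (2pdm + pm² + dm + m²)/N(d), π_O(d) = m²(1−p)²p² / ((d + m(1−p)p)²), π_Φ(d) = d·m²(1−p)²p / ((d + m(1−p)p)²·(d + m − mp²)), P_O(d) = π_O(d)/(π_O(d)+π_Φ(d)), P_Φ(d) = π_Φ(d)/(π_O(d)+π_Φ(d)), and T(d) = P_O(d)·((1/2)τ_A(d) + (1/2)τ_B(d)) + P_Φ(d)·((1/2)τ_A(d) + (1/2)τ_Γ(d)). Then T(d₁) = T(d₂); the mean cycle time, and hence the long-term BAoII Δ = T/2, is independent of the drift rate d. -/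
/-- The mean cycle time `T(d)` of the CTMC (and hence the long-term BAoII
`Δ = T/2`) is independent of the drift rate `d`: for any two drift rates
`d₁, d₂ > 0`, `T(d₁) = T(d₂)`. -/
theorem cycle_time_independent_of_drift
    (m p : ℝ) (hm : 0 < m) (hp0 : 0 < p) (hp1 : p < 1)
    (d₁ d₂ : ℝ) (hd₁ : 0 < d₁) (hd₂ : 0 < d₂)
    (N τA τB τΓ πO πΦ PO PΦ T : ℝ → ℝ)
    (hN : ∀ d, N d = p * m * m * (p * m + 2 * d + m))
    (hτA : ∀ d, τA d =
      (2 * p ^ 2 * m ^ 2 + 2 * p * d * m + 2 * p * m ^ 2 + d * m) / N d)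
    (hτB : ∀ d, τB d = (2 * p * d * m + p * m ^ 2 + d * m + m ^ 2) / N d)
    (hτΓ : ∀ d, τΓ d = (2 * p * d * m + p * m ^ 2 + d * m + m ^ 2) / N d)
    (hπO : ∀ d, πO d = m ^ 2 * (1 - p) ^ 2 * p ^ 2 / ((d + m * (1 - p) * p) ^ 2))
    (hπΦ : ∀ d, πΦ d = d * m ^ 2 * (1 - p) ^ 2 * p /
      ((d + m * (1 - p) * p) ^ 2 * (d + m - m * p ^ 2)))
    (hPO : ∀ d, PO d = πO d / (πO d + πΦ d))
    (hPΦ : ∀ d, PΦ d = πΦ d / (πO d + πΦ d))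
    (hT : ∀ d, T d = PO d * ((1 / 2) * τA d + (1 / 2) * τB d) +
      PΦ d * ((1 / 2) * τA d + (1 / 2) * τΓ d)) :
    T d₁ = T d₂ := by
  have key : ∀ d : ℝ, 0 < d → T d = (2 * p + 1) / (2 * p * m) := by
    intro d hd
    have hN0 : N d ≠ 0 := by
      rw [hN]
      have : 0 < p * m * m * (p * m + 2 * d + m) := by positivity
      exact ne_of_gt this
    have hπOpos : 0 < πO d := by
      rw [hπO]
      have h1 : (0:ℝ) < 1 - p := by linarith
      have h2 : 0 < d + m * (1 - p) * p := by positivity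
      positivity
    have hπΦpos : 0 < πΦ d := by
      rw [hπΦ]
      have h1 : (0:ℝ) < 1 - p := by linarith
      have h2 : 0 < d + m * (1 - p) * p := by positivity
      have h3 : 0 < d + m - m * p ^ 2 := by nlinarith
      positivity
    have hsum : πO d + πΦ d ≠ 0 := by positivity
    have hPsum : PO d + PΦ d = 1 := by
      rw [hPO, hPΦ, ← add_div, div_self hsum]
    rw [hT, hτΓ, ← hτB]
    have : PO d * (1 / 2 * τA d + 1 / 2 * τB d) + PΦ d * (1 / 2 * τA d + 1 / 2 * τB d)
        = (PO d + PΦ d) * (1 / 2 * τA d + 1 / 2 * τB d) := by ring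
    rw [this, hPsum, one_mul, hτA, hτB, hN]
    have hp : p ≠ 0 := ne_of_gt hp0
    have hmne : m ≠ 0 := ne_of_gt hm
    have hne : p * m + 2 * d + m ≠ 0 := by positivity
    field_simp
    ring
  rw [key d₁ hd₁, key d₂ hd₂]
end
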